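/- Let u₁, u₂, … be i.i.d. nonnegative integrable real random variables (the aperiodic, ≥ 0 case), and consider the reflected random walk Y_n^x = |Y_{n−1}^x − u_n| on [0,∞) with Y₀^x = x. Then the measure ν(dx) = (1 − F(x)) dx on [0,∞), where F is the distribution function of u₁, is invariant: ∫∫ f(|x − y|) ν(dx) μ(dy) = ∫ f dν for every nonnegative measurable f, where μ is the law of u₁. -/

import Mathlib

open MeasureTheory

namespace FellerAux

open Set Function

lemma lint_neg' (h : ℝ → ENNReal) : ∫⁻ x, h (-x) = ∫⁻ x, h x := by
  conv_rhs => rw [← Measure.map_neg_eq_self (volume : Measure ℝ)]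
  exact (lintegral_map_equiv h (MeasurableEquiv.neg ℝ)).symm

lemma lint_sub_left' (h : ℝ → ENNReal) (c : ℝ) : ∫⁻ x, h (c - x) = ∫⁻ x, h x := by
  calc ∫⁻ x, h (c - x) = ∫⁻ x, (fun t => h (c + t)) (-x) := by simp only [sub_eq_add_neg]
    _ = ∫⁻ x, h (c + x) := lint_neg' (fun t => h (c + t))
    _ = ∫⁻ x, h x := lintegral_add_left_eq_self h c

/-- First factor of the decomposed reflected integral. -/
noncomputable def Af (f : ℝ → ENNReal) (u y : ℝ) : ENNReal :=
  ∫⁻ z in Ioc (y - u) y ∩ Ioi 0, f z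

/-- Second factor of the decomposed reflected integral. -/
noncomputable def Bf (f : ℝ → ENNReal) (u y : ℝ) : ENNReal :=
  ∫⁻ z in Ico 0 (u - y), f z

lemma key1 {f : ℝ → ENNReal} (hf : Measurable f) (u y : ℝ) (hy : 0 ≤ y) :
    ∫⁻ x in Ico 0 u, f |x - y| = Af f u y + Bf f u y := by
  clear hf
  rw [Af, Bf]
  have hS1 : MeasurableSet (Ico (0:ℝ) u ∩ Iio y) := measurableSet_Ico.inter measurableSet_Iio
  have hS2 : MeasurableSet (Ico (0:ℝ) u ∩ Ici y) := measurableSet_Ico.inter measurableSet_Ici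
  have hC1 : MeasurableSet (Ioc (y - u) y ∩ Ioi (0:ℝ)) := measurableSet_Ioc.inter measurableSet_Ioi
  have hC2 : MeasurableSet (Ico (0:ℝ) (u - y)) := measurableSet_Ico
  have hsplit : Ico (0:ℝ) u = (Ico 0 u ∩ Iio y) ∪ (Ico 0 u ∩ Ici y) := by
    rw [← Set.inter_union_distrib_left, Set.Iio_union_Ici, Set.inter_univ]
  have hdisj : Disjoint (Ico (0:ℝ) u ∩ Iio y) (Ico 0 u ∩ Ici y) := by
    rw [Set.disjoint_left]; intro z hz1 hz2
    have a : z < y := hz1.2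
    have b : y ≤ z := hz2.2
    linarith
  rw [hsplit, lintegral_union hS2 hdisj]
  congr 1
  · have e1 : ∫⁻ x in Ico 0 u ∩ Iio y, f |x - y| = ∫⁻ x in Ico 0 u ∩ Iio y, f (y - x) := by
      apply setLIntegral_congr_fun hS1
      intro x hx
      dsimp only
      have h2 : x < y := hx.2
      rw [abs_sub_comm, abs_of_pos (by linarith : (0:ℝ) < y - x)]
    have hiff : ∀ x : ℝ, x ∈ Ico 0 u ∩ Iio y ↔ (y - x) ∈ Ioc (y - u) y ∩ Ioi 0 := by
      intro x
      simp only [mem_inter_iff, mem_Ico, mem_Iio, mem_Ioc, mem_Ioi]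
      constructor
      · rintro ⟨⟨h0, h1⟩, h2⟩; exact ⟨⟨by linarith, by linarith⟩, by linarith⟩
      · rintro ⟨⟨h0, h1⟩, h2⟩; exact ⟨⟨by linarith, by linarith⟩, by linarith⟩
    have e2 : ∀ x : ℝ, (Ico 0 u ∩ Iio y).indicator (fun x => f (y - x)) x
        = (Ioc (y - u) y ∩ Ioi 0).indicator f (y - x) := by
      intro x
      rw [Set.indicator_apply, Set.indicator_apply, if_congr (hiff x) rfl rfl]
    rw [e1, ← lintegral_indicator hS1, lintegral_congr e2,
      lint_sub_left' ((Ioc (y - u) y ∩ Ioi 0).indicator f) y,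
      lintegral_indicator hC1]
  · have e1 : ∫⁻ x in Ico 0 u ∩ Ici y, f |x - y| = ∫⁻ x in Ico 0 u ∩ Ici y, f (x - y) := by
      apply setLIntegral_congr_fun hS2
      intro x hx
      dsimp only
      have h2 : y ≤ x := hx.2
      rw [abs_of_nonneg (by linarith : (0:ℝ) ≤ x - y)]
    have hiff : ∀ x : ℝ, x ∈ Ico 0 u ∩ Ici y ↔ (x - y) ∈ Ico 0 (u - y) := by
      intro x
      simp only [mem_inter_iff, mem_Ico, mem_Ici]
      constructor
      · rintro ⟨⟨h0, h1⟩, h2⟩; exact ⟨by linarith, by linarith⟩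
      · rintro ⟨h0, h1⟩; exact ⟨⟨by linarith, by linarith⟩, by linarith⟩
    have e2 : ∀ x : ℝ, (Ico 0 u ∩ Ici y).indicator (fun x => f (x - y)) x
        = (Ico 0 (u - y)).indicator f (x - y) := by
      intro x
      rw [Set.indicator_apply, Set.indicator_apply, if_congr (hiff x) rfl rfl]
    rw [e1, ← lintegral_indicator hS2, lintegral_congr e2,
      lintegral_sub_right_eq_self ((Ico 0 (u - y)).indicator f) y,
      lintegral_indicator hC2]

lemma key3 (f : ℝ → ENNReal) (u y : ℝ) (hy : 0 ≤ y) :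
    Af f y u + Bf f u y = ∫⁻ z in Ico 0 u, f z := by
  rw [Af, Bf]
  have hdisj : Disjoint (Ioc (u - y) u ∩ Ioi (0:ℝ)) (Ico 0 (u - y)) := by
    rw [Set.disjoint_left]; intro z hz1 hz2
    have a : u - y < z := hz1.1.1
    have b : z < u - y := hz2.2
    linarith
  rw [← lintegral_union measurableSet_Ico hdisj]
  apply setLIntegral_congr
  have h0 : ∀ᵐ z : ℝ, z ∉ ({0, u - y, u} : Set ℝ) := by
    rw [← measure_eq_zero_iff_ae_notMem]
    exact Set.Finite.measure_zero (Set.toFinite _) volume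
  rw [Filter.eventuallyEq_set]
  filter_upwards [h0] with z hz
  simp only [mem_insert_iff, mem_singleton_iff, not_or] at hz
  obtain ⟨hz0, hz1, hz2⟩ := hz
  simp only [mem_union, mem_inter_iff, mem_Ioc, mem_Ioi, mem_Ico]
  constructor
  · rintro (⟨⟨h1, h2⟩, h3⟩ | ⟨h1, h2⟩)
    · exact ⟨le_of_lt h3, lt_of_le_of_ne h2 hz2⟩
    · exact ⟨h1, by linarith⟩
  · rintro ⟨h1, h2⟩
    rcases lt_or_ge z (u - y) with h | h
    · exact Or.inr ⟨h1, h⟩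
    · exact Or.inl ⟨⟨lt_of_le_of_ne h (Ne.symm hz1), le_of_lt h2⟩, lt_of_le_of_ne h1 (Ne.symm hz0)⟩

lemma hApair {f : ℝ → ENNReal} (hf : Measurable f) :
    Measurable (uncurry (Af f)) := by
  have hset : MeasurableSet {q : (ℝ × ℝ) × ℝ | q.1.2 - q.1.1 < q.2 ∧ q.2 ≤ q.1.2 ∧ 0 < q.2} := by
    simp only [Set.setOf_and]
    exact ((measurableSet_lt ((measurable_snd.comp measurable_fst).sub
        (measurable_fst.comp measurable_fst)) measurable_snd).inter
      ((measurableSet_le measurable_snd (measurable_snd.comp measurable_fst)).inter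
        (measurableSet_lt measurable_const measurable_snd)))
  have he : (uncurry (Af f))
      = fun p : ℝ × ℝ => ∫⁻ z,
          ({q : (ℝ × ℝ) × ℝ | q.1.2 - q.1.1 < q.2 ∧ q.2 ≤ q.1.2 ∧ 0 < q.2}.indicator
            (fun q => f q.2)) (p, z) ∂volume := by
    funext p
    show (∫⁻ z in Set.Ioc (p.2 - p.1) p.2 ∩ Set.Ioi 0, f z ∂volume) = _
    rw [← lintegral_indicator (measurableSet_Ioc.inter measurableSet_Ioi) f]
    refine lintegral_congr fun z => ?_
    have hiff : z ∈ Set.Ioc (p.2 - p.1) p.2 ∩ Set.Ioi 0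
        ↔ (p, z) ∈ {q : (ℝ × ℝ) × ℝ | q.1.2 - q.1.1 < q.2 ∧ q.2 ≤ q.1.2 ∧ 0 < q.2} := by
      simp only [Set.mem_inter_iff, Set.mem_Ioc, Set.mem_Ioi, Set.mem_setOf_eq]
      tauto
    rw [Set.indicator_apply, Set.indicator_apply, if_congr hiff rfl rfl]
  rw [he]
  exact Measurable.lintegral_prod_right' ((hf.comp measurable_snd).indicator hset)

lemma hBpair {f : ℝ → ENNReal} (hf : Measurable f) :
    Measurable (uncurry (Bf f)) := by
  have hset : MeasurableSet {q : (ℝ × ℝ) × ℝ | 0 ≤ q.2 ∧ q.2 < q.1.1 - q.1.2} := by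
    simp only [Set.setOf_and]
    exact (measurableSet_le measurable_const measurable_snd).inter
      (measurableSet_lt measurable_snd ((measurable_fst.comp measurable_fst).sub
        (measurable_snd.comp measurable_fst)))
  have he : (uncurry (Bf f))
      = fun p : ℝ × ℝ => ∫⁻ z,
          ({q : (ℝ × ℝ) × ℝ | 0 ≤ q.2 ∧ q.2 < q.1.1 - q.1.2}.indicator
            (fun q => f q.2)) (p, z) ∂volume := by
    funext p
    show (∫⁻ z in Set.Ico 0 (p.1 - p.2), f z ∂volume) = _
    rw [← lintegral_indicator measurableSet_Ico f]
    refine lintegral_congr fun z => ?_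
    have hiff : z ∈ Set.Ico 0 (p.1 - p.2)
        ↔ (p, z) ∈ {q : (ℝ × ℝ) × ℝ | 0 ≤ q.2 ∧ q.2 < q.1.1 - q.1.2} := by
      simp only [Set.mem_Ico, Set.mem_setOf_eq]
    rw [Set.indicator_apply, Set.indicator_apply, if_congr hiff rfl rfl]
  rw [he]
  exact Measurable.lintegral_prod_right' ((hf.comp measurable_snd).indicator hset)

lemma step' (μ : Measure ℝ) [IsProbabilityMeasure μ] {g : ℝ → ENNReal} (hg : Measurable g) :
    ∫⁻ x, g x ∂((volume.restrict (Ici (0:ℝ))).withDensity (fun x => μ (Ioi x)))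
      = ∫⁻ u, ∫⁻ x in Ico 0 u, g x ∂volume ∂μ := by
  have hG : Measurable fun x : ℝ => μ (Ioi x) :=
    Antitone.measurable (fun a b hab => measure_mono (Ioi_subset_Ioi hab))
  rw [lintegral_withDensity_eq_lintegral_mul _ hG hg]
  have h1 : ∀ x : ℝ, ((fun x => μ (Ioi x)) * g) x
      = ∫⁻ u, (Ioi x).indicator (fun _ => g x) u ∂μ := by
    intro x
    rw [lintegral_indicator_const measurableSet_Ioi, Pi.mul_apply, mul_comm]
  rw [lintegral_congr h1]
  have hm : AEMeasurable (Function.uncurry fun x u => (Ioi x).indicator (fun _ => g x) u)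
      ((volume.restrict (Ici (0:ℝ))).prod μ) := by
    have he : (Function.uncurry fun x u => (Ioi x).indicator (fun _ => g x) u)
        = {p : ℝ × ℝ | p.1 < p.2}.indicator (fun p => g p.1) := by
      funext p
      by_cases h : p.1 < p.2 <;>
        simp [Function.uncurry, Set.indicator_apply, h, Set.mem_Ioi]
    rw [he]
    exact ((hg.comp measurable_fst).indicator
      (measurableSet_lt measurable_fst measurable_snd)).aemeasurable
  rw [lintegral_lintegral_swap hm]
  refine lintegral_congr fun u => ?_
  have h2 : ∀ x : ℝ, (Ioi x).indicator (fun _ => g x) u = (Iio u).indicator g x := by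
    intro x
    rw [Set.indicator_apply, Set.indicator_apply,
      if_congr (show u ∈ Ioi x ↔ x ∈ Iio u by simp [Set.mem_Ioi, Set.mem_Iio]) rfl rfl]
  rw [lintegral_congr h2, lintegral_indicator measurableSet_Iio,
    Measure.restrict_restrict measurableSet_Iio, Set.inter_comm, Set.Ici_inter_Iio]

lemma core (μ : Measure ℝ) [IsProbabilityMeasure μ] {f : ℝ → ENNReal} (hf : Measurable f)
    (hae : ∀ᵐ y ∂μ, (0:ℝ) ≤ y) :
    (∫⁻ y, ∫⁻ u, ∫⁻ x in Ico 0 u, f |x - y| ∂volume ∂μ ∂μ)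
      = ∫⁻ u, ∫⁻ x in Ico 0 u, f x ∂volume ∂μ := by
  have hA := hApair hf
  have hAu : ∀ y : ℝ, Measurable fun u => Af f u y := fun y => hA.of_uncurry_right
  have hAyu : ∀ y : ℝ, Measurable fun u => Af f y u := fun y => hA.of_uncurry_left
  have hAy2 : Measurable fun y => ∫⁻ u, Af f u y ∂μ :=
    Measurable.lintegral_prod_right' (hA.comp measurable_swap)
  have hAy2' : Measurable fun y => ∫⁻ u, Af f y u ∂μ :=
    Measurable.lintegral_prod_right' hA
  have hmAswap : AEMeasurable (Function.uncurry fun y u => Af f u y) (μ.prod μ) :=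
    (hA.comp measurable_swap).aemeasurable
  calc
    ∫⁻ y, ∫⁻ u, ∫⁻ x in Set.Ico 0 u, f |x - y| ∂volume ∂μ ∂μ
      = ∫⁻ y, ∫⁻ u, (Af f u y + Bf f u y) ∂μ ∂μ := by
        refine lintegral_congr_ae ?_
        filter_upwards [hae] with y hy
        exact lintegral_congr fun u => key1 hf u y hy
    _ = ∫⁻ y, ((∫⁻ u, Af f u y ∂μ) + ∫⁻ u, Bf f u y ∂μ) ∂μ :=
        lintegral_congr fun y => lintegral_add_left (hAu y) _
    _ = (∫⁻ y, ∫⁻ u, Af f u y ∂μ ∂μ) + ∫⁻ y, ∫⁻ u, Bf f u y ∂μ ∂μ :=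
        lintegral_add_left hAy2 _
    _ = (∫⁻ u, ∫⁻ y, Af f u y ∂μ ∂μ) + ∫⁻ y, ∫⁻ u, Bf f u y ∂μ ∂μ := by
        rw [lintegral_lintegral_swap hmAswap]
    _ = ∫⁻ y, ((∫⁻ u, Af f y u ∂μ) + ∫⁻ u, Bf f u y ∂μ) ∂μ :=
        (lintegral_add_left hAy2' _).symm
    _ = ∫⁻ y, ∫⁻ u, (Af f y u + Bf f u y) ∂μ ∂μ :=
        lintegral_congr fun y => (lintegral_add_left (hAyu y) _).symm
    _ = ∫⁻ y, ∫⁻ u, (∫⁻ x in Set.Ico 0 u, f x ∂volume) ∂μ ∂μ := by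
        refine lintegral_congr_ae ?_
        filter_upwards [hae] with y hy
        exact lintegral_congr fun u => key3 f u y hy
    _ = ∫⁻ u, ∫⁻ x in Set.Ico 0 u, f x ∂volume ∂μ := by
        rw [lintegral_const, measure_univ, mul_one]

end FellerAux

open FellerAux

theorem feller_invariant_measure_reflected_walk
    (μ : Measure ℝ) [IsProbabilityMeasure μ]
    (hpos : μ (Set.Iio 0) = 0) (hint : Integrable (fun y : ℝ => |y|) μ) :
    ∀ f : ℝ → ENNReal, Measurable f →
      ∫⁻ y, ∫⁻ x, f |x - y|
          ∂((volume.restrict (Set.Ici (0 : ℝ))).withDensity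
              (fun x => ENNReal.ofReal (1 - (μ (Set.Iic x)).toReal))) ∂μ
        = ∫⁻ x, f x
          ∂((volume.restrict (Set.Ici (0 : ℝ))).withDensity
              (fun x => ENNReal.ofReal (1 - (μ (Set.Iic x)).toReal))) := by
  intro f hf
  clear hint
  have hden : (fun x : ℝ => ENNReal.ofReal (1 - (μ (Set.Iic x)).toReal))
      = fun x => μ (Set.Ioi x) := by
    funext x
    have hdisj : Disjoint (Set.Iic x) (Set.Ioi x) := by
      rw [Set.disjoint_left]; intro a ha hb
      exact absurd (show a ≤ x from ha) (not_le.mpr hb)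
    have hx : μ (Set.Iic x) + μ (Set.Ioi x) = 1 := by
      rw [← measure_union hdisj measurableSet_Ioi, Set.Iic_union_Ioi, measure_univ]
    have hle : μ (Set.Iic x) ≤ 1 := prob_le_one
    have hne : μ (Set.Iic x) ≠ ⊤ := measure_ne_top μ _
    have h2 : (1 : ENNReal) - μ (Set.Iic x) = μ (Set.Ioi x) := by
      rw [← hx]; exact ENNReal.add_sub_cancel_left hne
    rw [show (1:ℝ) - (μ (Set.Iic x)).toReal = ((1 : ENNReal) - μ (Set.Iic x)).toReal by
        rw [ENNReal.toReal_sub_of_le hle ENNReal.one_ne_top, ENNReal.toReal_one],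
      h2, ENNReal.ofReal_toReal (measure_ne_top μ _)]
  rw [hden]
  have hae : ∀ᵐ y ∂μ, (0:ℝ) ≤ y := by
    rw [ae_iff]
    have : {y : ℝ | ¬ (0:ℝ) ≤ y} = Set.Iio 0 := by ext z; simp [not_le]
    rw [this]; exact hpos
  have hL : ∀ y : ℝ, (∫⁻ x, f |x - y|
        ∂((volume.restrict (Set.Ici (0:ℝ))).withDensity fun x => μ (Set.Ioi x)))
      = ∫⁻ u, ∫⁻ x in Set.Ico 0 u, f |x - y| ∂volume ∂μ :=
    fun y => step' μ (hf.comp ((measurable_id.sub measurable_const).abs))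
  rw [lintegral_congr hL, step' μ hf]
  exact core μ hf hae
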